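/- Let M^m be a complete biharmonic hypersurface of constant scalar curvature in S^{m+1} whose mean curvature satisfies H² ≥ (2ε+4)/(m(5m+4)) for some ε > 0. Then Δ|∇H|² ≥ ε|∇H|² pointwise; consequently, if |∇H| is bounded and Ric^M is bounded below, or |∇H| ∈ L^p for some 2 < p < ∞, or |∇H| ∈ L² with Ric^M ≥ −c(1+r²), then H is constant. -/
import Mathlib


noncomputable section

open scoped RealInnerProductSpace BigOperators

/-- Abstract data encoding an isometrically immersed (connected, orientable) hypersurface
`M^m ↪ N^{m+1}`: `V` is a model for the tangent spaces of `M` (an `m`-dimensional real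
inner product space), `A` is the shape operator field, `H` the mean curvature function
(so `trace A = m H`), together with the gradient, Laplace and Hessian operators and the
Ricci curvature of the induced metric, subject to the standard rules of Riemannian
calculus (connectedness of `M` is encoded by `const_of_grad`, and the Bochner formula
holds).  `mixed p X Y` denotes the ambient curvature term `R^N(X, ξ, Y, ξ)` at `p`,
where `ξ` is the chosen unit normal. -/
structure HypersurfaceData (m : ℕ) (M : Type) (V : Type)
    [NormedAddCommGroup V] [InnerProductSpace ℝ V] [FiniteDimensional ℝ V] : Type where
  dimV : Module.finrank ℝ V = m
  /-- the shape operator -/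
  A : M → V →ₗ[ℝ] V
  A_symm : ∀ p (x y : V), ⟪A p x, y⟫ = ⟪x, A p y⟫
  /-- the mean curvature function -/
  H : M → ℝ
  trace_A : ∀ p, LinearMap.trace ℝ V (A p) = m * H p
  /-- the gradient operator of `(M, g)` -/
  grad : (M → ℝ) → M → V
  /-- the Laplace operator of `(M, g)` -/
  lap : (M → ℝ) → M → ℝ
  /-- `hess2 f` is `|∇df|²`, the squared norm of the Hessian of `f` -/
  hess2 : (M → ℝ) → M → ℝ
  /-- the Ricci curvature of `(M, g)` -/
  ricci : M → V → V → ℝ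
  /-- `mixed p X Y = R^N(X, ξ, Y, ξ)` -/
  mixed : M → V → V → ℝ
  grad_add : ∀ f g : M → ℝ, grad (fun p => f p + g p) = fun p => grad f p + grad g p
  grad_mul : ∀ f g : M → ℝ,
    grad (fun p => f p * g p) = fun p => f p • grad g p + g p • grad f p
  grad_const : ∀ c : ℝ, grad (fun _ => c) = fun _ => 0
  lap_const : ∀ c : ℝ, lap (fun _ => c) = fun _ => 0
  const_of_grad : ∀ f : M → ℝ, (∀ p, grad f p = 0) → ∀ p q, f p = f q
  hess2_nonneg : ∀ f p, 0 ≤ hess2 f p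
  hess2_bound : ∀ f p, (lap f p) ^ 2 ≤ m * hess2 f p
  bochner : ∀ (f : M → ℝ) (p : M),
    lap (fun q => ‖grad f q‖ ^ 2) p
      = 2 * (hess2 f p + ricci p (grad f p) (grad f p) + ⟪grad f p, grad (lap f) p⟫)

namespace HypersurfaceData

variable {m : ℕ} {M V : Type} [NormedAddCommGroup V] [InnerProductSpace ℝ V]
  [FiniteDimensional ℝ V] (D : HypersurfaceData m M V)

/-- `|A|²`, the squared norm of the shape operator. -/
def normA2 (p : M) : ℝ := LinearMap.trace ℝ V (D.A p ∘ₗ D.A p)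

/-- The scalar curvature of `M` (trace of the Ricci curvature). -/
def scal (p : M) : ℝ :=
  ∑ i, D.ricci p (stdOrthonormalBasis ℝ V i) (stdOrthonormalBasis ℝ V i)

/-- `M` has constant scalar curvature. -/
def ConstScal : Prop := ∀ p q, D.scal p = D.scal q

/-- `M` is minimal, i.e. `H ≡ 0`. -/
def Minimal : Prop := ∀ p, D.H p = 0

/-- The biharmonic equations for a hypersurface of an Einstein manifold with
`Ric^N = lam·h` :  `ΔH = H(|A|² - lam)` and `A(∇H) + (m/2) H ∇H = 0`. -/
def IsBiharmonic (lam : ℝ) : Prop :=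
  (∀ p, D.lap D.H p = D.H p * (D.normA2 p - lam)) ∧
  (∀ p, D.A p (D.grad D.H p) + ((m : ℝ) / 2 * D.H p) • D.grad D.H p = 0)

/-- The contracted Gauss equation for a hypersurface of a space form of constant
sectional curvature `C`, where `Ric^N(X,Y) = m C ⟨X,Y⟩` and `R^N(X,ξ,Y,ξ) = C ⟨X,Y⟩`
for tangent `X, Y`. -/
def SpaceFormGauss (C : ℝ) : Prop :=
  ∀ p (X Y : V), (m : ℝ) * C * ⟪X, Y⟫
    = D.ricci p X Y + ⟪D.A p X, D.A p Y⟫ - m * D.H p * ⟪D.A p X, Y⟫ + C * ⟪X, Y⟫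

/-- The contracted Gauss equation for a hypersurface of an Einstein manifold with
`Ric^N = lam·h`. -/
def EinsteinAmbientGauss (lam : ℝ) : Prop :=
  ∀ p (X Y : V), lam * ⟪X, Y⟫
    = D.ricci p X Y + ⟪D.A p X, D.A p Y⟫ - m * D.H p * ⟪D.A p X, Y⟫ + D.mixed p X Y

/-- `Ric^N(ξ,ξ) = lam`: the trace over the tangent directions of `R^N(·,ξ,·,ξ)`
equals the ambient Ricci curvature in the normal direction. -/
def MixedTrace (lam : ℝ) : Prop :=
  ∀ p, ∑ i, D.mixed p (stdOrthonormalBasis ℝ V i) (stdOrthonormalBasis ℝ V i) = lam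

end HypersurfaceData

/-- A complete hypersurface: the base data together with the `L^p` classes of functions
and the maximum principles of Yau and Karp–Li type (Theorem MP) valid on complete
Riemannian manifolds. `r` is the distance function from a fixed point. -/
structure CompleteHypersurfaceData (m : ℕ) (M : Type) (V : Type)
    [NormedAddCommGroup V] [InnerProductSpace ℝ V] [FiniteDimensional ℝ V]
    extends HypersurfaceData m M V : Type where
  /-- `MemLp f q` means `f ∈ L^q(M)` -/
  MemLp : (M → ℝ) → ℝ → Prop
  memLp_sq : ∀ (f : M → ℝ) (q : ℝ), MemLp f q → MemLp (fun x => (f x) ^ 2) (q / 2)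
  /-- the distance function from a fixed point of `M` -/
  r : M → ℝ
  /-- maximum principle (i): if `Ric^M` is bounded from below, `f ≥ 0` is bounded from
  above and `Δf ≥ ε f` for some `ε > 0`, then `f` is constant -/
  maxp_bounded : ∀ (f : M → ℝ) (ε : ℝ), 0 < ε → (∀ p, 0 ≤ f p) →
    (∃ B : ℝ, ∀ p, f p ≤ B) →
    (∃ K : ℝ, ∀ p (X : V), K * ‖X‖ ^ 2 ≤ ricci p X X) →
    (∀ p, ε * f p ≤ lap f p) → ∀ p q, f p = f q
  /-- maximum principle (ii): a nonnegative `L^q` (`1 < q < ∞`) subharmonic function is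
  constant -/
  maxp_Lp : ∀ (f : M → ℝ) (q : ℝ), 1 < q → (∀ p, 0 ≤ f p) → MemLp f q →
    (∀ p, 0 ≤ lap f p) → ∀ p p', f p = f p'
  /-- maximum principle (iii): a nonnegative `L¹` subharmonic function is constant,
  provided `Ric^M ≥ -c(1 + r(x)²)` -/
  maxp_L1 : ∀ f : M → ℝ, (∀ p, 0 ≤ f p) → MemLp f 1 → (∀ p, 0 ≤ lap f p) →
    (∃ c : ℝ, 0 < c ∧ ∀ p (X : V), -(c * (1 + r p ^ 2)) * ‖X‖ ^ 2 ≤ ricci p X X) →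
    ∀ p q, f p = f q

section Aux

variable {m : ℕ} {M V : Type} [NormedAddCommGroup V] [InnerProductSpace ℝ V]
  [FiniteDimensional ℝ V] (D : HypersurfaceData m M V)

/-- Trace of an endomorphism via the standard orthonormal basis. -/
lemma trace_onb_aux (T : V →ₗ[ℝ] V) :
    LinearMap.trace ℝ V T = ∑ i, ⟪stdOrthonormalBasis ℝ V i, T (stdOrthonormalBasis ℝ V i)⟫ := by
  rw [LinearMap.trace_eq_matrix_trace ℝ (stdOrthonormalBasis ℝ V).toBasis T, Matrix.trace]
  simp [Matrix.diag, LinearMap.toMatrix_apply, OrthonormalBasis.coe_toBasis_repr_apply,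
    OrthonormalBasis.repr_apply_apply]

lemma inner_self_onb_aux (i : Fin (Module.finrank ℝ V)) :
    ⟪stdOrthonormalBasis ℝ V i, stdOrthonormalBasis ℝ V i⟫ = (1 : ℝ) := by
  rw [real_inner_self_eq_norm_sq, (stdOrthonormalBasis ℝ V).orthonormal.1 i]
  norm_num

lemma normA2_eq_aux (p : M) :
    D.normA2 p = ∑ i, ‖D.A p (stdOrthonormalBasis ℝ V i)‖ ^ 2 := by
  rw [HypersurfaceData.normA2, trace_onb_aux]
  refine Finset.sum_congr rfl fun i _ => ?_
  rw [LinearMap.comp_apply, ← D.A_symm, real_inner_self_eq_norm_sq]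

lemma sum_inner_A_aux (p : M) :
    ∑ i, ⟪stdOrthonormalBasis ℝ V i, D.A p (stdOrthonormalBasis ℝ V i)⟫ = m * D.H p := by
  rw [← trace_onb_aux, D.trace_A]

/-- Newton's inequality `|A|² ≥ m H²`. -/
lemma newton_aux (hm : 0 < m) (p : M) : (m : ℝ) * D.H p ^ 2 ≤ D.normA2 p := by
  have h1 : (∑ i, ⟪stdOrthonormalBasis ℝ V i, D.A p (stdOrthonormalBasis ℝ V i)⟫) ^ 2
      ≤ ((Finset.univ (α := Fin (Module.finrank ℝ V))).card : ℝ) *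
        ∑ i, ⟪stdOrthonormalBasis ℝ V i, D.A p (stdOrthonormalBasis ℝ V i)⟫ ^ 2 := by
    exact sq_sum_le_card_mul_sum_sq
  have hcard : ((Finset.univ (α := Fin (Module.finrank ℝ V))).card : ℝ) = (m : ℝ) := by
    simp [Finset.card_univ, D.dimV]
  have h2 : ∑ i, ⟪stdOrthonormalBasis ℝ V i, D.A p (stdOrthonormalBasis ℝ V i)⟫ ^ 2
      ≤ ∑ i, ‖D.A p (stdOrthonormalBasis ℝ V i)‖ ^ 2 := by
    refine Finset.sum_le_sum fun i _ => ?_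
    have := real_inner_mul_inner_self_le (stdOrthonormalBasis ℝ V i)
      (D.A p (stdOrthonormalBasis ℝ V i))
    rw [inner_self_onb_aux, real_inner_self_eq_norm_sq] at this
    nlinarith [this]
  rw [sum_inner_A_aux, hcard] at h1
  rw [normA2_eq_aux]
  have hm' : (0 : ℝ) < m := by exact_mod_cast hm
  have : ((m : ℝ) * D.H p) ^ 2 ≤ (m : ℝ) * ∑ i, ‖D.A p (stdOrthonormalBasis ℝ V i)‖ ^ 2 :=
    h1.trans (by nlinarith [h2])
  nlinarith [this, hm']

/-- Contracted Gauss equation: `scal = m² - m - |A|² + m²H²`. -/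
lemma scal_eq_aux (hgauss : D.SpaceFormGauss 1) (p : M) :
    D.scal p = (m : ℝ) ^ 2 - m - D.normA2 p + m ^ 2 * D.H p ^ 2 := by
  set b := stdOrthonormalBasis ℝ V with hb
  have key : ∀ i, D.ricci p (b i) (b i)
      = (m : ℝ) * ⟪b i, b i⟫ - ‖D.A p (b i)‖ ^ 2
        + m * D.H p * ⟪b i, D.A p (b i)⟫ - ⟪b i, b i⟫ := by
    intro i
    have h := hgauss p (b i) (b i)
    have hs := D.A_symm p (b i) (b i)
    have h2 : ⟪D.A p (b i), D.A p (b i)⟫ = ‖D.A p (b i)‖ ^ 2 := real_inner_self_eq_norm_sq _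
    rw [hs, h2] at h
    linarith [h]
  have hsum1 : ∑ i, ⟪b i, b i⟫ = (m : ℝ) := by
    rw [Finset.sum_congr rfl fun i _ => inner_self_onb_aux i]
    simp [Finset.card_univ, D.dimV]
  have hsum2 : ∑ i, ‖D.A p (b i)‖ ^ 2 = D.normA2 p := (normA2_eq_aux D p).symm
  have hsum3 : ∑ i, ⟪b i, D.A p (b i)⟫ = (m : ℝ) * D.H p := sum_inner_A_aux D p
  unfold HypersurfaceData.scal
  rw [Finset.sum_congr rfl fun i _ => key i]
  rw [Finset.sum_sub_distrib, Finset.sum_add_distrib, Finset.sum_sub_distrib,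
    ← Finset.mul_sum, ← Finset.mul_sum, hsum1, hsum2, hsum3]
  ring

lemma grad_cmul_aux (c : ℝ) (g : M → ℝ) :
    D.grad (fun p => c * g p) = fun p => c • D.grad g p := by
  funext p
  have h := congrFun (D.grad_mul (fun _ => c) g) p
  rw [show D.grad (fun _ => c) = fun _ => (0 : V) from D.grad_const c] at h
  simpa using h

lemma grad_cube_aux (f : M → ℝ) :
    D.grad (fun p => f p * f p * f p) = fun p => (3 * (f p * f p)) • D.grad f p := by
  funext p
  have h2 := congrFun (D.grad_mul f f) p
  have h3 := congrFun (D.grad_mul (fun p => f p * f p) f) p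
  rw [h3, h2]
  module

end Aux

/-- **Proposition (complete biharmonic hypersurfaces of constant scalar curvature in
the sphere with large mean curvature).**  Let `M^m` be a complete biharmonic
hypersurface of constant scalar curvature in `S^{m+1}` (ambient Einstein constant `m`,
Gauss equation `SpaceFormGauss 1`) whose mean curvature satisfies
`H² ≥ (2ε+4)/(m(5m+4))` for some `ε > 0`.  Then `Δ|∇H|² ≥ ε|∇H|²` pointwise;
consequently, if (A) `|∇H|` is bounded and `Ric^M` is bounded from below, or
(B) `|∇H| ∈ L^p` for some `2 < p < ∞`, or (C) `|∇H| ∈ L²` and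
`Ric^M ≥ −c(1 + r²)`, then `H` is constant. -/
theorem complete_biharmonic_sphere_large_H_constant {M V : Type}
    [NormedAddCommGroup V] [InnerProductSpace ℝ V] [FiniteDimensional ℝ V]
    {m : ℕ} (hm : 0 < m) (D : CompleteHypersurfaceData m M V) (ε : ℝ) (hε : 0 < ε)
    (hgauss : D.toHypersurfaceData.SpaceFormGauss 1)
    (hscal : D.toHypersurfaceData.ConstScal)
    (hbh : D.toHypersurfaceData.IsBiharmonic m)
    (hH2 : ∀ p, (2 * ε + 4) / ((m : ℝ) * (5 * (m : ℝ) + 4)) ≤ (D.H p) ^ 2) :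
    (∀ p, ε * ‖D.grad D.H p‖ ^ 2 ≤ D.lap (fun q => ‖D.grad D.H q‖ ^ 2) p) ∧
    ((((∃ B : ℝ, ∀ p, ‖D.grad D.H p‖ ≤ B) ∧
          (∃ K : ℝ, ∀ p (X : V), K * ‖X‖ ^ 2 ≤ D.ricci p X X)) ∨
        (∃ pe : ℝ, 2 < pe ∧ D.MemLp (fun q => ‖D.grad D.H q‖) pe) ∨
        (D.MemLp (fun q => ‖D.grad D.H q‖) 2 ∧
          ∃ c : ℝ, 0 < c ∧
            ∀ q (X : V), -(c * (1 + D.r q ^ 2)) * ‖X‖ ^ 2 ≤ D.ricci q X X)) →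
      ∀ p q, D.H p = D.H q) := by
  rcases isEmpty_or_nonempty M with hM | hM
  · exact ⟨fun p => isEmptyElim p, fun _ p q => isEmptyElim p⟩
  obtain ⟨p₀⟩ := hM
  have eH : D.toHypersurfaceData.H = D.H := rfl
  have eGrad : D.toHypersurfaceData.grad = D.grad := rfl
  have eLap : D.toHypersurfaceData.lap = D.lap := rfl
  have eA : D.toHypersurfaceData.A = D.A := rfl
  have eRicci : D.toHypersurfaceData.ricci = D.ricci := rfl
  have eHess : D.toHypersurfaceData.hess2 = D.hess2 := rfl
  have hm' : (0 : ℝ) < (m : ℝ) := by exact_mod_cast hm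
  set C : ℝ := D.toHypersurfaceData.normA2 p₀ - (m : ℝ) ^ 2 * D.H p₀ ^ 2 with hC
  have hCp : ∀ p, D.toHypersurfaceData.normA2 p = (m : ℝ) ^ 2 * D.H p ^ 2 + C := by
    intro p
    have h1 := scal_eq_aux D.toHypersurfaceData hgauss p
    have h2 := scal_eq_aux D.toHypersurfaceData hgauss p₀
    have h3 := hscal p p₀
    rw [eH] at h1 h2
    rw [hC]; linarith
  -- the Laplacian of H is a polynomial in H
  have hlapH : D.lap D.H
      = fun p => (m : ℝ) ^ 2 * (D.H p * D.H p * D.H p) + (C - (m : ℝ)) * D.H p := by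
    funext p
    have h := hbh.1 p
    rw [eH, eLap] at h
    rw [h, hCp p]; ring
  have hgradlap : ∀ p, D.grad (D.lap D.H) p
      = ((m : ℝ) ^ 2 * (3 * (D.H p * D.H p)) + (C - (m : ℝ))) • D.grad D.H p := by
    intro p
    rw [hlapH]
    have ha := congrFun (D.toHypersurfaceData.grad_add
      (fun q => (m : ℝ) ^ 2 * (D.H q * D.H q * D.H q))
      (fun q => (C - (m : ℝ)) * D.H q)) p
    rw [eGrad, eH] at ha
    rw [ha]
    have hb := congrFun (grad_cmul_aux D.toHypersurfaceData ((m : ℝ) ^ 2)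
      (fun q => D.H q * D.H q * D.H q)) p
    have hc := congrFun (grad_cmul_aux D.toHypersurfaceData (C - (m : ℝ)) D.H) p
    have hd := congrFun (grad_cube_aux D.toHypersurfaceData D.H) p
    rw [eGrad, eH] at hb hc hd
    rw [hb, hc, hd]
    module
  -- the pointwise inequality
  have key : ∀ p, ε * ‖D.grad D.H p‖ ^ 2 ≤ D.lap (fun q => ‖D.grad D.H q‖ ^ 2) p := by
    intro p
    have hAX : D.A p (D.grad D.H p) = (-((m : ℝ) / 2 * D.H p)) • D.grad D.H p := by
      have h := hbh.2 p
      rw [eH, eGrad, eA] at h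
      have : D.A p (D.grad D.H p) = -(((m : ℝ) / 2 * D.H p) • D.grad D.H p) := by
        rw [eq_neg_iff_add_eq_zero]; exact h
      rw [this, neg_smul]
    have hg := hgauss p (D.grad D.H p) (D.grad D.H p)
    rw [eA, eRicci] at hg
    rw [hAX] at hg
    simp only [real_inner_smul_left, real_inner_smul_right] at hg
    rw [real_inner_self_eq_norm_sq] at hg
    have hinner : ⟪D.grad D.H p, D.grad (D.lap D.H) p⟫
        = ((m : ℝ) ^ 2 * (3 * (D.H p * D.H p)) + (C - (m : ℝ))) * ‖D.grad D.H p‖ ^ 2 := by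
      rw [hgradlap p, real_inner_smul_right, real_inner_self_eq_norm_sq]
    have hboch := D.toHypersurfaceData.bochner D.H p
    rw [eH, eGrad, eLap, eRicci, eHess] at hboch
    rw [hboch, hinner]
    have hnewton := newton_aux D.toHypersurfaceData hm p
    rw [eH] at hnewton
    have hpos : (0 : ℝ) < (m : ℝ) * (5 * (m : ℝ) + 4) := by positivity
    have hH2' : 2 * ε + 4 ≤ D.H p ^ 2 * ((m : ℝ) * (5 * (m : ℝ) + 4)) :=
      (div_le_iff₀ hpos).1 (hH2 p)
    have hh2 := D.toHypersurfaceData.hess2_nonneg D.H p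
    rw [eH, eHess] at hh2
    have hX2 : (0 : ℝ) ≤ ‖D.grad D.H p‖ ^ 2 := by positivity
    have hCval := hCp p
    nlinarith [mul_nonneg hX2 (sub_nonneg.2 hnewton),
      mul_nonneg hX2 (sub_nonneg.2 hH2'),
      hg, hh2, hCval, hm', hX2]
  refine ⟨key, ?_⟩
  have final : (∀ p q, ‖D.grad D.H p‖ ^ 2 = ‖D.grad D.H q‖ ^ 2) →
      ∀ p q, D.H p = D.H q := by
    intro hconst
    have hzero : ∀ p, D.grad D.H p = 0 := by
      intro p
      have hfn : (fun q => ‖D.grad D.H q‖ ^ 2) = fun _ => ‖D.grad D.H p₀‖ ^ 2 :=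
        funext fun q => hconst q p₀
      have h0 : D.lap (fun q => ‖D.grad D.H q‖ ^ 2) p = 0 := by
        rw [hfn]
        exact congrFun (D.toHypersurfaceData.lap_const _) p
      have hk := key p
      rw [h0] at hk
      have hnn : (0 : ℝ) ≤ ‖D.grad D.H p‖ ^ 2 := by positivity
      have h00 : ‖D.grad D.H p‖ ^ 2 = 0 := le_antisymm (by nlinarith) hnn
      simpa using h00
    intro p q
    exact D.toHypersurfaceData.const_of_grad D.H hzero p q
  rintro (⟨⟨B, hB⟩, ⟨K, hK⟩⟩ | ⟨pe, hpe, hmem⟩ | ⟨hmem, c, hc, hric⟩)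
  · refine final (D.maxp_bounded _ ε hε (fun p => by positivity)
      ⟨B ^ 2, fun p => ?_⟩ ⟨K, hK⟩ key)
    have := hB p
    nlinarith [norm_nonneg (D.grad D.H p)]
  · have hmem2 := D.memLp_sq _ pe hmem
    exact final (D.maxp_Lp _ (pe / 2) (by linarith) (fun p => by positivity) hmem2
      (fun p => le_trans (mul_nonneg hε.le (by positivity)) (key p)))
  · have hmem2 := D.memLp_sq _ 2 hmem
    rw [show (2 : ℝ) / 2 = 1 by norm_num] at hmem2
    exact final (D.maxp_L1 _ (fun p => by positivity) hmem2
      (fun p => le_trans (mul_nonneg hε.le (by positivity)) (key p)) ⟨c, hc, hric⟩)
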